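/- Set n_k = k^{2k}, v_k = n_{k+1} − n_k, and u_k = (4 log₂(v_k) / (n_{k+1} a_{n_{k+1}}))^{1/2}. Assume (a_n) are positive reals with n a_n nondecreasing to ∞, a_n nonincreasing to 0, and n a_n/(log₂ n)^{7/3} → ∞. Let R_k have Poisson distribution with mean v_k a_{n_{k+1}}, and define c_k = P( R_k < (1 − u_k) v_k a_{n_{k+1}} ) and b_k = P( R_k > (1 + u_k) v_k a_{n_{k+1}} ). Then Σ_k c_k < ∞ and Σ_k b_k < ∞; in fact, for all sufficiently large k, c_k ≤ exp(−2 log₂ n_k). -/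

import Mathlib

open MeasureTheory ProbabilityTheory Filter

/-- `llog u = log (log (u ⊔ e))`. -/
noncomputable def llog (x : ℝ) : ℝ := Real.log (Real.log (max x (Real.exp 1)))

/-- Sup-norm over `[0,1]`. -/
noncomputable def supNorm (f : ℝ → ℝ) : ℝ := ⨆ t : Set.Icc (0:ℝ) 1, |f t|

/-- Membership in the Strassen set `S₁`. -/
def InStrassen1 (f : ℝ → ℝ) : Prop :=
  ∃ f' : ℝ → ℝ, Measurable f' ∧
    (∀ x ∈ Set.Icc (0:ℝ) 1, f x = ∫ t in (0:ℝ)..x, f' t) ∧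
    (∫ t in (0:ℝ)..1, (f' t) ^ 2) ≤ 1

/-- Membership in `S₂ = {f ∈ S₁ : f 1 = 0}`. -/
def InStrassen2 (f : ℝ → ℝ) : Prop := InStrassen1 f ∧ f 1 = 0

variable {Ω : Type*} [MeasurableSpace Ω]

/-- Empirical distribution function `F_n`. -/
noncomputable def empF (U : ℕ → Ω → ℝ) (n : ℕ) (t : ℝ) (ω : Ω) : ℝ :=
  (Set.ncard {i : ℕ | i < n ∧ U i ω ≤ t} : ℝ) / n

/-- Uniform empirical process `α_n(t) = √n (F_n(t) - t)`. -/
noncomputable def empProc (U : ℕ → Ω → ℝ) (n : ℕ) (t : ℝ) (ω : Ω) : ℝ :=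
  Real.sqrt n * (empF U n t ω - t)

/-- `H_n(t) = n (F_n(t) - t)`. -/
noncomputable def empH (U : ℕ → Ω → ℝ) (n : ℕ) (t : ℝ) (ω : Ω) : ℝ :=
  (n : ℝ) * (empF U n t ω - t)

/-- The generalized inverse `F_n⁻¹(t) = inf {u : F_n(u) ≥ t}`. -/
noncomputable def empQF (U : ℕ → Ω → ℝ) (n : ℕ) (t : ℝ) (ω : Ω) : ℝ :=
  sInf {u : ℝ | t ≤ empF U n u ω}

/-- Uniform quantile process `β_n(t) = √n (F_n⁻¹(t) - t)`. -/
noncomputable def quantProc (U : ℕ → Ω → ℝ) (n : ℕ) (t : ℝ) (ω : Ω) : ℝ :=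
  Real.sqrt n * (empQF U n t ω - t)

/-- `(U_i)` are i.i.d. uniform on `[0,1]`. -/
def IsUniformIID (μ : Measure Ω) (U : ℕ → Ω → ℝ) : Prop :=
  (∀ i, Measurable (U i)) ∧
  iIndepFun U μ ∧
  (∀ i, Measure.map (U i) μ = MeasureTheory.volume.restrict (Set.Icc (0:ℝ) 1))

/-- `n_k = k^{2k}`. -/
def nk (k : ℕ) : ℕ := k ^ (2 * k)

/-- `v_k = n_{k+1} - n_k`. -/
def vk (k : ℕ) : ℕ := nk (k + 1) - nk k

/-- The Poisson probability `P(X = l)` for a Poisson random variable with mean `m`. -/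
noncomputable def poissonProb (m : ℝ) (l : ℕ) : ℝ :=
  Real.exp (-m) * m ^ l / (Nat.factorial l)

/-- `u_k = (4 log₂ v_k / (n_{k+1} a_{n_{k+1}}))^{1/2}`. -/
noncomputable def uk (a : ℕ → ℝ) (k : ℕ) : ℝ :=
  Real.sqrt (4 * llog (vk k) / ((nk (k + 1) : ℝ) * a (nk (k + 1))))

section Helpers
open Filter

lemma one_le_log_max (x : ℝ) : 1 ≤ Real.log (max x (Real.exp 1)) := by
  calc (1:ℝ) = Real.log (Real.exp 1) := (Real.log_exp 1).symm
  _ ≤ _ := Real.log_le_log (Real.exp_pos 1) (le_max_right _ _)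

lemma llog_nonneg (x : ℝ) : 0 ≤ llog x :=
  Real.log_nonneg (one_le_log_max x)

lemma llog_mono {x y : ℝ} (h : x ≤ y) : llog x ≤ llog y := by
  unfold llog
  apply Real.log_le_log (lt_of_lt_of_le one_pos (one_le_log_max x))
  exact Real.log_le_log (lt_of_lt_of_le (Real.exp_pos 1) (le_max_right _ _))
    (max_le_max h le_rfl)

lemma llog_eq {x : ℝ} (hx : Real.exp 1 ≤ x) : llog x = Real.log (Real.log x) := by
  unfold llog; rw [max_eq_left hx]

lemma poissonProb_nonneg {m : ℝ} (hm : 0 ≤ m) (l : ℕ) : 0 ≤ poissonProb m l :=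
  div_nonneg (mul_nonneg (Real.exp_pos _).le (pow_nonneg hm _)) (Nat.cast_nonneg _)

lemma tsum_exp_aux (x : ℝ) : ∑' l : ℕ, x ^ l / (Nat.factorial l : ℝ) = Real.exp x := by
  rw [Real.exp_eq_exp_ℝ, NormedSpace.exp_eq_tsum_div]

lemma exp_neg_le_quad {u : ℝ} (hu : 0 ≤ u) : Real.exp (-u) ≤ 1 - u + u ^ 2 / 2 := by
  have h1 : 1 + u + u ^ 2 / 2 ≤ Real.exp u := Real.quadratic_le_exp_of_nonneg hu
  have hQ : 0 < 1 - u + u ^ 2 / 2 := by nlinarith [sq_nonneg (u - 1)]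
  rw [Real.exp_neg, inv_eq_one_div, div_le_iff₀ (Real.exp_pos u)]
  nlinarith [mul_le_mul_of_nonneg_left h1 hQ.le, pow_nonneg hu 4, sq_nonneg (u^2)]

lemma exp_le_quad {u : ℝ} (hu0 : 0 ≤ u) (hu1 : u ≤ 1/2) :
    Real.exp u ≤ 1 + u + 2/3 * u ^ 2 := by
  have h := Real.exp_bound' hu0 (by linarith) (n := 3) (by norm_num)
  have hs : (∑ m ∈ Finset.range 3, u ^ m / m.factorial) = 1 + u + u ^ 2 / 2 := by
    simp [Finset.sum_range_succ]
  rw [hs] at h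
  norm_num [Nat.factorial] at h
  nlinarith [mul_nonneg (mul_nonneg hu0 hu0) (by linarith : (0:ℝ) ≤ 3/4 - u)]

lemma summable_helper {f g : ℕ → ℝ} (hf : ∀ n, 0 ≤ f n)
    (h : ∀ᶠ n in atTop, f n ≤ g n) (hg : Summable g) : Summable f := by
  obtain ⟨N, hN⟩ := eventually_atTop.mp h
  rw [← summable_nat_add_iff N]
  exact Summable.of_nonneg_of_le (fun n => hf _)
    (fun n => hN _ (Nat.le_add_left N n)) ((summable_nat_add_iff N).mpr hg)

lemma chernoff_low {m u : ℝ} (hm : 0 < m) (hu0 : 0 ≤ u) (hu1 : u < 1) :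
    (∑' l : ℕ, if (l : ℝ) < (1 - u) * m then poissonProb m l else 0)
      ≤ Real.exp (-(m * u ^ 2 / 2)) := by
  have hEneg : Real.exp (-u) ≤ 1 - u + u ^ 2 / 2 := exp_neg_le_quad hu0
  set y : ℝ := m * Real.exp (-u) with hy
  set C : ℝ := Real.exp (u * ((1 - u) * m) - m) with hC
  have hC0 : 0 < C := Real.exp_pos _
  have hwle : ∀ l : ℕ, (if (l : ℝ) < (1 - u) * m then poissonProb m l else 0)
      ≤ C * (y ^ l / (Nat.factorial l : ℝ)) := by
    intro l
    have hfac : (0:ℝ) < (Nat.factorial l : ℝ) := by positivity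
    by_cases h : (l : ℝ) < (1 - u) * m
    · rw [if_pos h]
      have key : Real.exp (-m) ≤ C * Real.exp ((l : ℕ) * -u) := by
        rw [hC, ← Real.exp_add]
        apply Real.exp_le_exp.mpr
        have : 0 ≤ u * ((1 - u) * m - l) := mul_nonneg hu0 (by linarith)
        nlinarith [this]
      have expand : C * (y ^ l / (Nat.factorial l : ℝ))
          = (C * Real.exp ((l : ℕ) * -u)) * m ^ l / (Nat.factorial l : ℝ) := by
        rw [hy, mul_pow, Real.exp_nat_mul]
        ring
      rw [poissonProb, expand]
      gcongr
    · rw [if_neg h]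
      have : 0 ≤ y := mul_nonneg hm.le (Real.exp_pos _).le
      positivity
  have hsum_y : Summable (fun l : ℕ => C * (y ^ l / (Nat.factorial l : ℝ))) :=
    (Real.summable_pow_div_factorial y).mul_left C
  have hsum_lhs : Summable (fun l : ℕ =>
      if (l : ℝ) < (1 - u) * m then poissonProb m l else 0) :=
    Summable.of_nonneg_of_le
      (fun l => by split_ifs with h; exacts [poissonProb_nonneg hm.le l, le_refl 0])
      hwle hsum_y
  calc (∑' l : ℕ, if (l : ℝ) < (1 - u) * m then poissonProb m l else 0)
      ≤ ∑' l : ℕ, C * (y ^ l / (Nat.factorial l : ℝ)) := Summable.tsum_le_tsum hwle hsum_lhs hsum_y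
    _ = C * ∑' l : ℕ, y ^ l / (Nat.factorial l : ℝ) := tsum_mul_left
    _ = C * Real.exp y := by rw [tsum_exp_aux]
    _ = Real.exp ((u * ((1 - u) * m) - m) + y) := by rw [hC, ← Real.exp_add]
    _ ≤ Real.exp (-(m * u ^ 2 / 2)) := by
        apply Real.exp_le_exp.mpr
        rw [hy]
        nlinarith [mul_le_mul_of_nonneg_left hEneg hm.le]

lemma chernoff_high {m u : ℝ} (hm : 0 < m) (hu0 : 0 ≤ u) (hu1 : u ≤ 1/2) :
    (∑' l : ℕ, if (1 + u) * m < (l : ℝ) then poissonProb m l else 0)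
      ≤ Real.exp (-(m * u ^ 2 / 3)) := by
  have hE : Real.exp u ≤ 1 + u + 2/3 * u ^ 2 := exp_le_quad hu0 hu1
  set y : ℝ := m * Real.exp u with hy
  set C : ℝ := Real.exp (-(u * ((1 + u) * m)) - m) with hC
  have hC0 : 0 < C := Real.exp_pos _
  have hwle : ∀ l : ℕ, (if (1 + u) * m < (l : ℝ) then poissonProb m l else 0)
      ≤ C * (y ^ l / (Nat.factorial l : ℝ)) := by
    intro l
    have hfac : (0:ℝ) < (Nat.factorial l : ℝ) := by positivity
    by_cases h : (1 + u) * m < (l : ℝ)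
    · rw [if_pos h]
      have key : Real.exp (-m) ≤ C * Real.exp ((l : ℕ) * u) := by
        rw [hC, ← Real.exp_add]
        apply Real.exp_le_exp.mpr
        have : 0 ≤ u * ((l : ℝ) - (1 + u) * m) := mul_nonneg hu0 (by linarith)
        nlinarith [this]
      have expand : C * (y ^ l / (Nat.factorial l : ℝ))
          = (C * Real.exp ((l : ℕ) * u)) * m ^ l / (Nat.factorial l : ℝ) := by
        rw [hy, mul_pow, Real.exp_nat_mul]
        ring
      rw [poissonProb, expand]
      gcongr
    · rw [if_neg h]
      have : 0 ≤ y := mul_nonneg hm.le (Real.exp_pos _).le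
      positivity
  have hsum_y : Summable (fun l : ℕ => C * (y ^ l / (Nat.factorial l : ℝ))) :=
    (Real.summable_pow_div_factorial y).mul_left C
  have hsum_lhs : Summable (fun l : ℕ =>
      if (1 + u) * m < (l : ℝ) then poissonProb m l else 0) :=
    Summable.of_nonneg_of_le
      (fun l => by split_ifs with h; exacts [poissonProb_nonneg hm.le l, le_refl 0])
      hwle hsum_y
  calc (∑' l : ℕ, if (1 + u) * m < (l : ℝ) then poissonProb m l else 0)
      ≤ ∑' l : ℕ, C * (y ^ l / (Nat.factorial l : ℝ)) := Summable.tsum_le_tsum hwle hsum_lhs hsum_y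
    _ = C * ∑' l : ℕ, y ^ l / (Nat.factorial l : ℝ) := tsum_mul_left
    _ = C * Real.exp y := by rw [tsum_exp_aux]
    _ = Real.exp ((-(u * ((1 + u) * m)) - m) + y) := by rw [hC, ← Real.exp_add]
    _ ≤ Real.exp (-(m * u ^ 2 / 3)) := by
        apply Real.exp_le_exp.mpr
        rw [hy]
        nlinarith [mul_le_mul_of_nonneg_left hE hm.le]

end Helpers

set_option maxHeartbeats 1000000 in
open scoped Classical in
theorem statement (a : ℕ → ℝ) (ha_pos : ∀ n, 0 < a n)
    (hna_mono : Monotone (fun n : ℕ => (n : ℝ) * a n))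
    (hna_top : Tendsto (fun n : ℕ => (n : ℝ) * a n) atTop atTop)
    (ha_anti : Antitone a) (ha_lim : Tendsto a atTop (nhds 0))
    (h73 : Tendsto (fun n : ℕ => (n : ℝ) * a n / llog n ^ ((7:ℝ)/3)) atTop atTop)
    (c b : ℕ → ℝ)
    (hc : ∀ k, c k = ∑' l : ℕ,
      if (l : ℝ) < (1 - uk a k) * (vk k : ℝ) * a (nk (k + 1))
        then poissonProb ((vk k : ℝ) * a (nk (k + 1))) l else 0)
    (hb : ∀ k, b k = ∑' l : ℕ,
      if (1 + uk a k) * (vk k : ℝ) * a (nk (k + 1)) < (l : ℝ)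
        then poissonProb ((vk k : ℝ) * a (nk (k + 1))) l else 0) :
    Summable c ∧ Summable b ∧
      ∀ᶠ k : ℕ in atTop, c k ≤ Real.exp (-2 * llog (nk k)) := by
  obtain ⟨N1, hN1⟩ := eventually_atTop.mp (h73.eventually_ge_atTop 400)
  have hc0 : ∀ k, 0 ≤ c k := fun k => by
    rw [hc k]
    refine tsum_nonneg fun l => ?_
    split_ifs with h
    · exact poissonProb_nonneg (mul_nonneg (Nat.cast_nonneg _) (ha_pos _).le) l
    · exact le_refl 0
  have hb0 : ∀ k, 0 ≤ b k := fun k => by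
    rw [hb k]
    refine tsum_nonneg fun l => ?_
    split_ifs with h
    · exact poissonProb_nonneg (mul_nonneg (Nat.cast_nonneg _) (ha_pos _).le) l
    · exact le_refl 0
  have hkey : ∀ᶠ k : ℕ in atTop,
      c k ≤ Real.exp (-2 * llog (nk k)) ∧
      b k ≤ Real.exp (-(32/27) * llog (nk k)) ∧
      Real.exp (-2 * llog (nk k)) ≤ (k : ℝ) ^ (-2 : ℝ) ∧
      Real.exp (-(32/27) * llog (nk k)) ≤ (k : ℝ) ^ (-(32/27) : ℝ) := by
    filter_upwards [eventually_ge_atTop (max 150 N1)] with k hk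
    have hk150 : (150:ℕ) ≤ k := le_trans (le_max_left _ _) hk
    have hkN1 : N1 ≤ k := le_trans (le_max_right _ _) hk
    have hnn : nk k ≤ nk (k+1) := by
      unfold nk
      calc k ^ (2*k) ≤ (k+1) ^ (2*k) := Nat.pow_le_pow_left (Nat.le_succ k) _
      _ ≤ (k+1) ^ (2*(k+1)) := Nat.pow_le_pow_right (by omega) (by omega)
    have hn1_ge : nk k * (k+1)^2 ≤ nk (k+1) := by
      unfold nk
      calc k ^ (2*k) * (k+1)^2 ≤ (k+1) ^ (2*k) * (k+1)^2 :=
        Nat.mul_le_mul_right _ (Nat.pow_le_pow_left (Nat.le_succ k) _)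
      _ = (k+1) ^ (2*(k+1)) := by rw [← pow_add]; ring_nf
    have hA_ge_k : k ≤ nk k := Nat.le_self_pow (by omega) k
    have hn1_ge_k : k + 1 ≤ nk (k+1) := Nat.le_self_pow (by omega) (k+1)
    set kr : ℝ := (k : ℝ) with hkr_def
    set A : ℝ := ((nk k : ℕ) : ℝ) with hA_def
    set B : ℝ := ((nk (k+1) : ℕ) : ℝ) with hB_def
    set V : ℝ := ((vk k : ℕ) : ℝ) with hV_def
    set a1 : ℝ := a (nk (k+1)) with ha1_def
    have ha1p : 0 < a1 := ha_pos _
    have hkr : (150:ℝ) ≤ kr := by rw [hkr_def]; exact_mod_cast hk150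
    have hkr0 : (0:ℝ) < kr := by linarith
    have hkrsq : (22500:ℝ) ≤ kr^2 := by
      nlinarith [mul_le_mul hkr hkr (by norm_num : (0:ℝ) ≤ 150) (by linarith : (0:ℝ) ≤ kr)]
    have hVBA : V = B - A := by
      rw [hV_def, hB_def, hA_def, vk, Nat.cast_sub hnn]
    have hAk : kr ≤ A := by rw [hA_def, hkr_def]; exact_mod_cast hA_ge_k
    have hA1 : (1:ℝ) ≤ A := le_trans (by linarith) hAk
    have hBge : A * (kr + 1)^2 ≤ B := by
      rw [hA_def, hB_def, hkr_def]
      exact_mod_cast hn1_ge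
    have hVge : A * kr^2 ≤ V := by
      have := mul_nonneg (show (0:ℝ) ≤ A by linarith) hkr0.le
      linarith [hBge]
    have hVA : A ≤ V := by
      have := mul_le_mul_of_nonneg_left (show (1:ℝ) ≤ kr^2 by linarith) (show (0:ℝ) ≤ A by linarith)
      linarith [hVge]
    have hV0 : (0:ℝ) < V := by linarith
    have hB0 : (0:ℝ) < B := by linarith
    have he3 : Real.exp 1 ≤ 3 := le_trans Real.exp_one_lt_d9.le (by norm_num)
    have heA : Real.exp 1 ≤ A := by linarith
    have heV : Real.exp 1 ≤ V := by linarith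
    have hlogk1 : 1 ≤ Real.log kr := by
      calc (1:ℝ) = Real.log (Real.exp 1) := (Real.log_exp 1).symm
      _ ≤ Real.log kr := Real.log_le_log (Real.exp_pos 1) (by linarith)
    have hlogA2 : Real.log A = 2 * kr * Real.log kr := by
      have e : A = kr ^ (2*k) := by rw [hA_def, hkr_def, nk]; push_cast; ring
      rw [e, Real.log_pow]
      push_cast
      ring
    have h2kr_pos : (0:ℝ) < 2 * kr * Real.log kr :=
      mul_pos (by linarith) (by linarith)
    have hlogA_pos : 0 < Real.log A := by rw [hlogA2]; exact h2kr_pos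
    have hllogA : llog A = Real.log (2 * kr * Real.log kr) := by
      rw [llog_eq heA, hlogA2]
    have h2krlog_ge : 2 * kr ≤ 2 * kr * Real.log kr := by
      have := mul_le_mul_of_nonneg_left hlogk1 (show (0:ℝ) ≤ 2*kr by linarith)
      linarith
    have hllogA_le : llog A ≤ 3 * Real.log kr := by
      rw [hllogA]
      have h1 : Real.log kr ≤ kr := by linarith [Real.log_le_sub_one_of_pos hkr0]
      have h1b := mul_le_mul_of_nonneg_left h1 (show (0:ℝ) ≤ 2*kr by linarith)
      have h1c := mul_le_mul_of_nonneg_right (show (2:ℝ) ≤ kr by linarith) (sq_nonneg kr)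
      have h2 : 2 * kr * Real.log kr ≤ kr ^ 3 := by nlinarith [h1b, h1c]
      calc Real.log (2*kr*Real.log kr) ≤ Real.log (kr ^ 3) := Real.log_le_log h2kr_pos h2
      _ = 3 * Real.log kr := by rw [Real.log_pow]; push_cast; ring
    have hllogA_pos : 0 < llog A := by
      rw [hllogA]; apply Real.log_pos; linarith
    have hllogA1 : 1 ≤ llog A := by
      rw [hllogA]
      calc (1:ℝ) = Real.log (Real.exp 1) := (Real.log_exp 1).symm
      _ ≤ _ := Real.log_le_log (Real.exp_pos 1) (by linarith)
    have hlogV_ge : (2*kr + 2) * Real.log kr ≤ Real.log V := by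
      have h := Real.log_le_log (mul_pos (show (0:ℝ) < A by linarith) (pow_pos hkr0 2)) hVge
      rw [Real.log_mul (by linarith : A ≠ 0) (ne_of_gt (pow_pos hkr0 2)), Real.log_pow] at h
      push_cast at h
      linarith [hlogA2, h]
    have hllogV : llog V = Real.log (Real.log V) := llog_eq heV
    have hkk1_pos : (0:ℝ) < (kr+1)/kr := div_pos (by linarith) hkr0
    have hratio : llog A + Real.log ((kr+1)/kr) ≤ llog V := by
      rw [hllogV, hllogA]
      have e1 : ((kr+1)/kr) * (2 * kr * Real.log kr) = (2*kr+2) * Real.log kr := by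
        field_simp
      have e2 : Real.log (((kr+1)/kr) * (2*kr*Real.log kr))
          = Real.log ((kr+1)/kr) + Real.log (2*kr*Real.log kr) :=
        Real.log_mul (ne_of_gt hkk1_pos) (ne_of_gt h2kr_pos)
      have h5 : Real.log (((kr+1)/kr) * (2*kr*Real.log kr)) ≤ Real.log (Real.log V) := by
        apply Real.log_le_log (mul_pos hkk1_pos h2kr_pos)
        rw [e1]; exact hlogV_ge
      rw [e2] at h5
      linarith
    have hlog1k : 1/(2*kr) ≤ Real.log ((kr+1)/kr) := by
      have hx : Real.log (kr/(kr+1)) ≤ kr/(kr+1) - 1 :=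
        Real.log_le_sub_one_of_pos (div_pos hkr0 (by linarith))
      have hinv : Real.log ((kr+1)/kr) = - Real.log (kr/(kr+1)) := by
        rw [← Real.log_inv, inv_div]
      have he : kr/(kr+1) - 1 = -(1/(kr+1)) := by field_simp; ring
      have h1 : 1/(kr+1) ≤ Real.log ((kr+1)/kr) := by
        rw [hinv]; rw [he] at hx; linarith
      have h2 : 1/(2*kr) ≤ 1/(kr+1) :=
        one_div_le_one_div_of_le (by linarith) (by linarith)
      linarith
    have hlogk_le : Real.log kr ≤ kr / 6 := by
      have h144 : (12:ℝ)^2 ≤ kr := by norm_num; linarith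
      have hs12 : (12:ℝ) ≤ Real.sqrt kr :=
        le_trans (le_of_eq (Real.sqrt_sq (by norm_num : (0:ℝ) ≤ 12)).symm)
          (Real.sqrt_le_sqrt h144)
      have hsp : 0 < Real.sqrt kr := by linarith
      have hls : Real.log (Real.sqrt kr) ≤ Real.sqrt kr - 1 :=
        Real.log_le_sub_one_of_pos hsp
      rw [Real.log_sqrt hkr0.le] at hls
      have hsq : Real.sqrt kr ^ 2 = kr := Real.sq_sqrt hkr0.le
      have hm := mul_le_mul_of_nonneg_right hs12 (Real.sqrt_nonneg kr)
      nlinarith [hls, hm, hsq]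
    have hV6 : 6 * kr * Real.log kr * A ≤ V := by
      have q1 : kr * (6*Real.log kr) ≤ kr * kr :=
        mul_le_mul_of_nonneg_left (by linarith) hkr0.le
      have q2 : (kr*(6*Real.log kr)) * A ≤ (kr*kr) * A :=
        mul_le_mul_of_nonneg_right q1 (by linarith)
      calc 6*kr*Real.log kr*A = (kr*(6*Real.log kr))*A := by ring
      _ ≤ (kr*kr)*A := q2
      _ = A * kr^2 := by ring
      _ ≤ V := hVge
    have KEY1 : llog A * B ≤ llog V * V := by
      have hs1 : 3 * Real.log kr * A ≤ (1/(2*kr)) * V := by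
        have h6 := mul_le_mul_of_nonneg_left hV6
          (show (0:ℝ) ≤ 1/(2*kr) by positivity)
        have e3 : (1/(2*kr)) * (6*kr*Real.log kr*A) = 3*Real.log kr*A := by
          field_simp; ring
        rw [e3] at h6
        exact h6
      have hBVA : B = V + A := by linarith
      have p1 : (llog A + 1/(2*kr)) * V ≤ llog V * V :=
        mul_le_mul_of_nonneg_right (by linarith) hV0.le
      have p2 : (llog A + 1/(2*kr)) * V = llog A * V + (1/(2*kr)) * V := by ring
      have p3 : llog A * B = llog A * V + llog A * A := by rw [hBVA]; ring
      have p4 : llog A * A ≤ 3 * Real.log kr * A :=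
        mul_le_mul_of_nonneg_right hllogA_le (by linarith)
      linarith
    have hllogB1 : 1 ≤ llog B := le_trans hllogA1 (llog_mono (by linarith))
    have hllogB0 : (0:ℝ) < llog B := by linarith
    have h400 : 400 * llog B ≤ B * a1 := by
      have h := hN1 (nk (k+1)) (le_trans hkN1 (le_trans (Nat.le_succ k) hn1_ge_k))
      rw [← hB_def, ← ha1_def] at h
      have hp : 0 < llog B ^ ((7:ℝ)/3) := Real.rpow_pos_of_pos hllogB0 _
      have h2 := (le_div_iff₀ hp).mp h
      have h3 : llog B ≤ llog B ^ ((7:ℝ)/3) := by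
        calc llog B = llog B ^ (1:ℝ) := (Real.rpow_one _).symm
        _ ≤ _ := Real.rpow_le_rpow_of_exponent_le hllogB1 (by norm_num)
      linarith
    have hllogVB : llog V ≤ llog B := llog_mono (by linarith)
    have hBa0 : 0 < B * a1 := mul_pos hB0 ha1p
    have hu0 : 0 ≤ uk a k := Real.sqrt_nonneg _
    have huk_eq : uk a k = Real.sqrt (4 * llog V / (B * a1)) := by
      rw [uk, ← hV_def, ← hB_def, ← ha1_def]
    have hu_sq : (uk a k)^2 = 4 * llog V / (B * a1) := by
      rw [huk_eq]
      exact Real.sq_sqrt (div_nonneg (by linarith [llog_nonneg V]) hBa0.le)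
    have hu_le : uk a k ≤ 1/10 := by
      have harg : 4 * llog V / (B * a1) ≤ 1/100 := by
        rw [div_le_iff₀ hBa0]
        linarith [hllogVB, h400, llog_nonneg V]
      calc uk a k = Real.sqrt (4 * llog V / (B * a1)) := huk_eq
      _ ≤ Real.sqrt (1/100) := Real.sqrt_le_sqrt harg
      _ = 1/10 := by
          rw [show (1/100:ℝ) = (1/10)^2 by norm_num, Real.sqrt_sq (by norm_num)]
    have hm0 : (0:ℝ) < V * a1 := mul_pos hV0 ha1p
    have hmu2 : V * a1 * (uk a k)^2 = 4 * V * llog V / B := by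
      rw [hu_sq]; field_simp
    refine ⟨?_, ?_, ?_, ?_⟩

    · rw [hc k]
      simp only [mul_assoc]
      rw [← hV_def, ← ha1_def]
      refine le_trans (chernoff_low (m := V * a1) hm0 hu0
        (lt_of_le_of_lt hu_le (by norm_num))) ?_
      apply Real.exp_le_exp.mpr
      rw [hmu2]
      have h4 : 2 * llog A ≤ 4 * V * llog V / B / 2 := by
        rw [div_div, le_div_iff₀ (by linarith : (0:ℝ) < B * 2)]
        linarith [KEY1]
      linarith
    · rw [hb k]
      simp only [mul_assoc]
      rw [← hV_def, ← ha1_def]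
      refine le_trans (chernoff_high (m := V * a1) hm0 hu0 (by linarith)) ?_
      apply Real.exp_le_exp.mpr
      rw [hmu2]
      have h4 : 32/27 * llog A ≤ 4 * V * llog V / B / 3 := by
        rw [div_div, le_div_iff₀ (by linarith : (0:ℝ) < B * 3)]
        linarith [KEY1, mul_pos hllogA_pos hB0]
      linarith
    · have h1 : kr ≤ Real.log A := by linarith [h2krlog_ge, hlogA2]
      have h2 : (Real.log A) ^ (-2:ℝ) = Real.exp (-2 * llog A) := by
        rw [Real.rpow_def_of_pos hlogA_pos, llog_eq heA]
        ring_nf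
      rw [← h2]
      exact Real.rpow_le_rpow_of_nonpos hkr0 h1 (by norm_num)
    · have h1 : kr ≤ Real.log A := by linarith [h2krlog_ge, hlogA2]
      have h2 : (Real.log A) ^ (-(32/27):ℝ) = Real.exp (-(32/27) * llog A) := by
        rw [Real.rpow_def_of_pos hlogA_pos, llog_eq heA]
        ring_nf
      rw [← h2]
      exact Real.rpow_le_rpow_of_nonpos hkr0 h1 (by norm_num)
  refine ⟨?_, ?_, hkey.mono fun k h => h.1⟩
  · exact summable_helper hc0 (hkey.mono fun k h => le_trans h.1 h.2.2.1)
      ((Real.summable_nat_rpow (p := (-2:ℝ))).mpr (by norm_num))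
  · exact summable_helper hb0 (hkey.mono fun k h => le_trans h.2.1 h.2.2.2)
      ((Real.summable_nat_rpow (p := (-(32/27):ℝ))).mpr (by norm_num))
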